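/- Fix positive integers N and j. Let (ε_{i,k}), for i = 1,…,N and k = 1,…,j, be independent identically distributed random variables on a probability space, each taking the value 1 with probability 1/2 and the value −1 with probability 1/2. For each i set S_i = Σ_{k=1}^{j} ε_{i,k} (so S_i is the displacement after j steps of the i-th independent sample path of the symmetric ±1 random walk). Then for every real number ε with 0 < ε and ε²·N < j, one has P( | (1/N) Σ_{i=1}^{N} S_i | ≥ ε ) ≥ (1/3) · (1 − ε²·N/j)². -/

import Mathlib

open MeasureTheory ProbabilityTheory

section rwaux


variable {Ω : Type*} [MeasurableSpace Ω] {μ : Measure Ω} [IsProbabilityMeasure μ]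

lemma rademacher_ae {f : Ω → ℝ} (hm : Measurable f)
    (h1 : μ {ω | f ω = 1} = 1/2) (h2 : μ {ω | f ω = -1} = 1/2) :
    ∀ᵐ ω ∂μ, f ω = 1 ∨ f ω = -1 := by
  have hA : MeasurableSet {ω | f ω = 1} := hm (measurableSet_singleton 1)
  have hB : MeasurableSet {ω | f ω = -1} := hm (measurableSet_singleton (-1))
  have hd : Disjoint {ω | f ω = 1} {ω | f ω = -1} := by
    rw [Set.disjoint_left]
    rintro ω (h : f ω = 1) (h' : f ω = -1)
    norm_num [h] at h'
  have hu : μ ({ω | f ω = 1} ∪ {ω | f ω = -1}) = 1 := by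
    rw [measure_union hd hB, h1, h2, ENNReal.div_add_div_same]
    norm_num
    exact ENNReal.div_self (by norm_num) (by norm_num)
  have hc : μ ({ω | f ω = 1} ∪ {ω | f ω = -1})ᶜ = 0 := by
    rw [measure_compl (hA.union hB) (measure_ne_top _ _), hu, measure_univ, tsub_self]
  rw [ae_iff]
  have heq : {a | ¬(f a = 1 ∨ f a = -1)} = ({ω | f ω = 1} ∪ {ω | f ω = -1})ᶜ := by
    ext a; simp [not_or]
  rw [heq]; exact hc

lemma rademacher_integral {f : Ω → ℝ} (hm : Measurable f)
    (h1 : μ {ω | f ω = 1} = 1/2) (h2 : μ {ω | f ω = -1} = 1/2) :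
    ∫ ω, f ω ∂μ = 0 := by
  have hA : MeasurableSet {ω | f ω = 1} := hm (measurableSet_singleton 1)
  have hB : MeasurableSet {ω | f ω = -1} := hm (measurableSet_singleton (-1))
  have hae := rademacher_ae hm h1 h2
  have hcong : f =ᵐ[μ] fun ω =>
      Set.indicator {ω | f ω = 1} (fun _ => (1:ℝ)) ω
        + Set.indicator {ω | f ω = -1} (fun _ => (-1:ℝ)) ω := by
    filter_upwards [hae] with ω hω
    rcases hω with h | h
    · have h' : ω ∉ {ω | f ω = -1} := by
        simp only [Set.mem_setOf_eq, h]; norm_num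
      simp [Set.indicator_of_mem (show ω ∈ {ω | f ω = 1} from h),
        Set.indicator_of_notMem h', h]
    · have h' : ω ∉ {ω | f ω = 1} := by
        simp only [Set.mem_setOf_eq, h]; norm_num
      simp [Set.indicator_of_mem (show ω ∈ {ω | f ω = -1} from h),
        Set.indicator_of_notMem h', h]
  rw [integral_congr_ae hcong, integral_add ((integrable_const (1:ℝ)).indicator hA)
    ((integrable_const (-1:ℝ)).indicator hB), integral_indicator_const _ hA,
    integral_indicator_const _ hB, measureReal_def, measureReal_def, h1, h2]
  simp [ENNReal.toReal_div]


variable {Ω : Type*} [MeasurableSpace Ω] {μ : Measure Ω} [IsProbabilityMeasure μ]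

/-- Integrability from an a.e. bound. -/
lemma integrable_of_ae_bound {f : Ω → ℝ} {c : ℝ} (hm : Measurable f)
    (hb : ∀ᵐ ω ∂μ, |f ω| ≤ c) : Integrable f μ := by
  refine (integrable_const c).mono' hm.aestronglyMeasurable ?_
  filter_upwards [hb] with ω hω using by simpa [Real.norm_eq_abs] using hω

variable {ι : Type*} [Fintype ι]

/-- A.e. bound on partial sums of a.e.-bounded-by-1 variables. -/
lemma sum_ae_bound {Y : ι → Ω → ℝ} (hae : ∀ p, ∀ᵐ ω ∂μ, Y p ω = 1 ∨ Y p ω = -1)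
    (s : Finset ι) : ∀ᵐ ω ∂μ, |∑ p ∈ s, Y p ω| ≤ s.card := by
  have h : ∀ᵐ ω ∂μ, ∀ p, Y p ω = 1 ∨ Y p ω = -1 := ae_all_iff.2 hae
  filter_upwards [h] with ω hω
  calc |∑ p ∈ s, Y p ω| ≤ ∑ p ∈ s, |Y p ω| := Finset.abs_sum_le_sum_abs _ _
    _ ≤ ∑ p ∈ s, 1 := Finset.sum_le_sum (fun p _ => by rcases hω p with h | h <;> simp [h])
    _ = s.card := by simp

/-- Second and fourth moments of a sum of independent Rademacher variables. -/
lemma rademacher_sum_moments {Y : ι → Ω → ℝ} (hmeas : ∀ p, Measurable (Y p))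
    (hindep : iIndepFun Y μ)
    (hae : ∀ p, ∀ᵐ ω ∂μ, Y p ω = 1 ∨ Y p ω = -1)
    (hE : ∀ p, ∫ ω, Y p ω ∂μ = 0) (s : Finset ι) :
    (∫ ω, (∑ p ∈ s, Y p ω) ^ 2 ∂μ = s.card) ∧
    (∫ ω, (∑ p ∈ s, Y p ω) ^ 4 ∂μ ≤ 3 * (s.card : ℝ) ^ 2) := by
  classical
  induction s using Finset.induction_on with
  | empty => simp
  | @insert a s ha ih =>
    obtain ⟨ih2, ih4⟩ := ih
    set S : Ω → ℝ := fun ω => ∑ p ∈ s, Y p ω with hS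
    have hSmeas : Measurable S := by
      apply Finset.measurable_sum
      exact fun p _ => hmeas p
    have hSb : ∀ᵐ ω ∂μ, |S ω| ≤ s.card := sum_ae_bound hae s
    have hYb : ∀ᵐ ω ∂μ, |Y a ω| ≤ 1 := by
      filter_upwards [hae a] with ω hω using by rcases hω with h | h <;> simp [h]
    -- independence of S and Y a
    have hind : IndepFun S (Y a) μ := by
      have := hindep.indepFun_finsetSum_of_notMem hmeas ha
      have heq : (∑ p ∈ s, Y p) = S := by
        funext ω; simp [hS, Finset.sum_apply]
      rwa [heq] at this
    -- mixed moments factor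
    have hmix : ∀ k l : ℕ, ∫ ω, S ω ^ k * Y a ω ^ l ∂μ
        = (∫ ω, S ω ^ k ∂μ) * ∫ ω, Y a ω ^ l ∂μ := by
      intro k l
      have h := (hind.comp (measurable_id.pow_const k) (measurable_id.pow_const l)).integral_fun_mul_eq_mul_integral
        (hSmeas.pow_const k).aestronglyMeasurable ((hmeas a).pow_const l).aestronglyMeasurable
      simpa [Function.comp] using h
    -- integrability of all mixed terms
    have hint : ∀ k l : ℕ, Integrable (fun ω => S ω ^ k * Y a ω ^ l) μ := by
      intro k l
      refine integrable_of_ae_bound (c := ((s.card : ℝ)) ^ k)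
        ((hSmeas.pow_const k).mul ((hmeas a).pow_const l)) ?_
      filter_upwards [hSb, hYb] with ω h1 h2
      rw [abs_mul, abs_pow, abs_pow]
      calc |S ω| ^ k * |Y a ω| ^ l ≤ (s.card : ℝ) ^ k * 1 ^ l := by
            apply mul_le_mul (pow_le_pow_left₀ (abs_nonneg _) h1 k)
              (pow_le_pow_left₀ (abs_nonneg _) h2 l) (by positivity) (by positivity)
        _ = (s.card : ℝ) ^ k := by simp
    -- moments of Y a
    have hYae := hae a
    have hY2 : ∫ ω, Y a ω ^ 2 ∂μ = 1 := by
      have : (fun ω => Y a ω ^ 2) =ᵐ[μ] fun _ => (1:ℝ) := by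
        filter_upwards [hYae] with ω hω using by rcases hω with h | h <;> norm_num [h]
      rw [integral_congr_ae this]; simp
    have hY3 : ∫ ω, Y a ω ^ 3 ∂μ = 0 := by
      have : (fun ω => Y a ω ^ 3) =ᵐ[μ] fun ω => Y a ω := by
        filter_upwards [hYae] with ω hω using by rcases hω with h | h <;> simp [h]; ring
      rw [integral_congr_ae this]; exact hE a
    have hY4 : ∫ ω, Y a ω ^ 4 ∂μ = 1 := by
      have : (fun ω => Y a ω ^ 4) =ᵐ[μ] fun _ => (1:ℝ) := by
        filter_upwards [hYae] with ω hω using by rcases hω with h | h <;> norm_num [h]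
      rw [integral_congr_ae this]; simp
    have hY1 : ∫ ω, Y a ω ∂μ = 0 := hE a
    -- sums over insert
    have hsum : ∀ ω, ∑ p ∈ insert a s, Y p ω = S ω + Y a ω := by
      intro ω; rw [Finset.sum_insert ha]; ring
    have hcard : ((insert a s).card : ℝ) = s.card + 1 := by
      rw [Finset.card_insert_of_notMem ha]; push_cast; ring
    constructor
    · have expand : ∀ ω, (S ω + Y a ω) ^ 2
          = S ω ^ 2 * Y a ω ^ 0 + 2 * (S ω ^ 1 * Y a ω ^ 1) + S ω ^ 0 * Y a ω ^ 2 := by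
        intro ω; ring
      calc ∫ ω, (∑ p ∈ insert a s, Y p ω) ^ 2 ∂μ
          = ∫ ω, (S ω ^ 2 * Y a ω ^ 0 + 2 * (S ω ^ 1 * Y a ω ^ 1) + S ω ^ 0 * Y a ω ^ 2) ∂μ := by
            simp only [hsum]; exact integral_congr_ae (Filter.Eventually.of_forall
              (fun ω => expand ω))
        _ = (∫ ω, S ω ^ 2 * Y a ω ^ 0 ∂μ) + 2 * (∫ ω, S ω ^ 1 * Y a ω ^ 1 ∂μ)
              + ∫ ω, S ω ^ 0 * Y a ω ^ 2 ∂μ := by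
            have e1 : ∫ ω, (S ω ^ 2 * Y a ω ^ 0 + 2 * (S ω ^ 1 * Y a ω ^ 1))
                  + S ω ^ 0 * Y a ω ^ 2 ∂μ
                = (∫ ω, S ω ^ 2 * Y a ω ^ 0 + 2 * (S ω ^ 1 * Y a ω ^ 1) ∂μ)
                  + ∫ ω, S ω ^ 0 * Y a ω ^ 2 ∂μ :=
              integral_add ((hint 2 0).add ((hint 1 1).const_mul 2)) (hint 0 2)
            have e2 : ∫ ω, S ω ^ 2 * Y a ω ^ 0 + 2 * (S ω ^ 1 * Y a ω ^ 1) ∂μ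
                = (∫ ω, S ω ^ 2 * Y a ω ^ 0 ∂μ) + ∫ ω, 2 * (S ω ^ 1 * Y a ω ^ 1) ∂μ :=
              integral_add (hint 2 0) ((hint 1 1).const_mul 2)
            rw [e1, e2, integral_const_mul _ _]
        _ = ((insert a s).card : ℝ) := by
            rw [hmix 2 0, hmix 1 1, hmix 0 2]
            simp only [pow_zero, pow_one]
            rw [hY1, hY2, show (∫ ω, S ω ^ 2 ∂μ) = (s.card : ℝ) from ih2, hcard]
            simp
    · have expand : ∀ ω, (S ω + Y a ω) ^ 4
          = S ω ^ 4 * Y a ω ^ 0 + 4 * (S ω ^ 3 * Y a ω ^ 1) + 6 * (S ω ^ 2 * Y a ω ^ 2)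
            + 4 * (S ω ^ 1 * Y a ω ^ 3) + S ω ^ 0 * Y a ω ^ 4 := by
        intro ω; ring
      have step : ∫ ω, (∑ p ∈ insert a s, Y p ω) ^ 4 ∂μ
          = (∫ ω, S ω ^ 4 * Y a ω ^ 0 ∂μ) + 4 * (∫ ω, S ω ^ 3 * Y a ω ^ 1 ∂μ)
            + 6 * (∫ ω, S ω ^ 2 * Y a ω ^ 2 ∂μ) + 4 * (∫ ω, S ω ^ 1 * Y a ω ^ 3 ∂μ)
            + ∫ ω, S ω ^ 0 * Y a ω ^ 4 ∂μ := by
        rw [show (fun ω => (∑ p ∈ insert a s, Y p ω) ^ 4)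
            = fun ω => S ω ^ 4 * Y a ω ^ 0 + 4 * (S ω ^ 3 * Y a ω ^ 1)
              + 6 * (S ω ^ 2 * Y a ω ^ 2) + 4 * (S ω ^ 1 * Y a ω ^ 3) + S ω ^ 0 * Y a ω ^ 4
            from funext fun ω => by rw [hsum ω]; exact expand ω]
        have e1 : ∫ ω, (S ω ^ 4 * Y a ω ^ 0 + 4 * (S ω ^ 3 * Y a ω ^ 1)
              + 6 * (S ω ^ 2 * Y a ω ^ 2) + 4 * (S ω ^ 1 * Y a ω ^ 3))
              + S ω ^ 0 * Y a ω ^ 4 ∂μ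
            = (∫ ω, S ω ^ 4 * Y a ω ^ 0 + 4 * (S ω ^ 3 * Y a ω ^ 1)
              + 6 * (S ω ^ 2 * Y a ω ^ 2) + 4 * (S ω ^ 1 * Y a ω ^ 3) ∂μ)
              + ∫ ω, S ω ^ 0 * Y a ω ^ 4 ∂μ :=
          integral_add ((((hint 4 0).add ((hint 3 1).const_mul 4)).add
            ((hint 2 2).const_mul 6)).add ((hint 1 3).const_mul 4)) (hint 0 4)
        have e2 : ∫ ω, (S ω ^ 4 * Y a ω ^ 0 + 4 * (S ω ^ 3 * Y a ω ^ 1)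
              + 6 * (S ω ^ 2 * Y a ω ^ 2)) + 4 * (S ω ^ 1 * Y a ω ^ 3) ∂μ
            = (∫ ω, S ω ^ 4 * Y a ω ^ 0 + 4 * (S ω ^ 3 * Y a ω ^ 1)
              + 6 * (S ω ^ 2 * Y a ω ^ 2) ∂μ) + ∫ ω, 4 * (S ω ^ 1 * Y a ω ^ 3) ∂μ :=
          integral_add (((hint 4 0).add ((hint 3 1).const_mul 4)).add
            ((hint 2 2).const_mul 6)) ((hint 1 3).const_mul 4)
        have e3 : ∫ ω, (S ω ^ 4 * Y a ω ^ 0 + 4 * (S ω ^ 3 * Y a ω ^ 1))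
              + 6 * (S ω ^ 2 * Y a ω ^ 2) ∂μ
            = (∫ ω, S ω ^ 4 * Y a ω ^ 0 + 4 * (S ω ^ 3 * Y a ω ^ 1) ∂μ)
              + ∫ ω, 6 * (S ω ^ 2 * Y a ω ^ 2) ∂μ :=
          integral_add ((hint 4 0).add ((hint 3 1).const_mul 4)) ((hint 2 2).const_mul 6)
        have e4 : ∫ ω, S ω ^ 4 * Y a ω ^ 0 + 4 * (S ω ^ 3 * Y a ω ^ 1) ∂μ
            = (∫ ω, S ω ^ 4 * Y a ω ^ 0 ∂μ) + ∫ ω, 4 * (S ω ^ 3 * Y a ω ^ 1) ∂μ :=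
          integral_add (hint 4 0) ((hint 3 1).const_mul 4)
        rw [e1, e2, e3, e4, integral_const_mul _ _, integral_const_mul _ _, integral_const_mul _ _]
      rw [step, hmix 4 0, hmix 3 1, hmix 2 2, hmix 1 3, hmix 0 4]
      simp only [pow_zero, pow_one, hY1, hY2, hY3, hY4, mul_zero, mul_one, zero_mul,
        add_zero, one_mul, integral_const, measureReal_def, measure_univ, ENNReal.toReal_one, smul_eq_mul]
      rw [show (∫ ω, S ω ^ 2 ∂μ) = (s.card : ℝ) from ih2, hcard]
      have h4 : ∫ ω, S ω ^ 4 ∂μ ≤ 3 * (s.card : ℝ) ^ 2 := ih4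
      nlinarith [Nat.cast_nonneg (α := ℝ) s.card]
end rwaux

section rwaux2
variable {Ω : Type*} [MeasurableSpace Ω] {μ : Measure Ω} [IsProbabilityMeasure μ]

theorem test_pz
    {Ω : Type*} [MeasurableSpace Ω] (μ : Measure Ω) [IsProbabilityMeasure μ]
    (T : Ω → ℝ) (hTmeas : Measurable T) (n : ℝ) (hn : 0 < n)
    (hTb : ∀ᵐ ω ∂μ, |T ω| ≤ n)
    (m2 : ∫ ω, T ω ^ 2 ∂μ = n) (m4 : ∫ ω, T ω ^ 4 ∂μ ≤ 3 * n ^ 2)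
    (c : ℝ) (hc : 0 ≤ c) (hcn : c < n) :
    ENNReal.ofReal ((1/3) * (1 - c / n) ^ 2) ≤ μ {ω | c ≤ T ω ^ 2} := by
  set A : Set Ω := {ω | c ≤ T ω ^ 2} with hA
  have hAm : MeasurableSet A := measurableSet_le measurable_const ((hTmeas.pow_const 2))
  have intT2 : Integrable (fun ω => T ω ^ 2) μ := by
    refine Integrable.mono' (integrable_const (n ^ 2)) (hTmeas.pow_const 2).aestronglyMeasurable ?_
    filter_upwards [hTb] with ω hω
    rw [Real.norm_eq_abs, abs_pow]
    exact pow_le_pow_left₀ (abs_nonneg _) hω 2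
  have intg : Integrable (A.indicator fun ω => T ω ^ 2) μ := intT2.indicator hAm
  -- step 1 : n - c ≤ ∫ g
  have step1 : n - c ≤ ∫ ω, A.indicator (fun ω => T ω ^ 2) ω ∂μ := by
    have hmono : ∫ ω, T ω ^ 2 ∂μ
        ≤ ∫ ω, (A.indicator (fun ω => T ω ^ 2) ω + c) ∂μ := by
      refine integral_mono intT2 (intg.add (integrable_const c)) ?_
      intro ω
      by_cases h : ω ∈ A
      · simp only [Set.indicator_of_mem h]
        linarith
      · have : ¬ (c ≤ T ω ^ 2) := h
        simp only [Set.indicator_of_notMem h]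
        linarith [not_le.mp this]
    rw [integral_add intg (integrable_const c), integral_const, measureReal_def, measure_univ] at hmono
    simp only [ENNReal.toReal_one, smul_eq_mul, one_mul, m2] at hmono
    linarith
  -- step 2 : Cauchy-Schwarz
  have hrnn : (0:ℝ) ≤ (μ A).toReal := ENNReal.toReal_nonneg
  have step2 : ∫ ω, A.indicator (fun ω => T ω ^ 2) ω ∂μ
      ≤ Real.sqrt (3 * n ^ 2) * Real.sqrt ((μ A).toReal) := by
    have hconj : Real.HolderConjugate 2 2 := Real.holderConjugate_iff.mpr ⟨by norm_num, by norm_num⟩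
    have hf : MemLp (fun ω => T ω ^ 2) (ENNReal.ofReal 2) μ := by
      refine MemLp.of_bound (hTmeas.pow_const 2).aestronglyMeasurable (n ^ 2) ?_
      filter_upwards [hTb] with ω hω
      rw [Real.norm_eq_abs, abs_pow]
      exact pow_le_pow_left₀ (abs_nonneg _) hω 2
    have hg : MemLp (A.indicator fun _ => (1:ℝ)) (ENNReal.ofReal 2) μ := by
      refine MemLp.of_bound ((measurable_one.indicator hAm).aestronglyMeasurable) 1 ?_
      refine Filter.Eventually.of_forall fun ω => ?_
      by_cases h : ω ∈ A <;>
        simp [Set.indicator_of_mem, Set.indicator_of_notMem, h]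
    have hcs := integral_mul_le_Lp_mul_Lq_of_nonneg hconj
      (Filter.Eventually.of_forall fun ω => sq_nonneg (T ω))
      (Filter.Eventually.of_forall fun ω => Set.indicator_nonneg (fun _ _ => zero_le_one) ω)
      hf hg
    have he1 : (fun ω => A.indicator (fun ω => T ω ^ 2) ω)
        = fun ω => T ω ^ 2 * A.indicator (fun _ => (1:ℝ)) ω := by
      funext ω
      by_cases h : ω ∈ A <;>
        simp [Set.indicator_of_mem, Set.indicator_of_notMem, h]
    have he2 : ∫ ω, (T ω ^ 2) ^ (2:ℝ) ∂μ = ∫ ω, T ω ^ 4 ∂μ := by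
      refine integral_congr_ae (Filter.Eventually.of_forall fun ω => ?_)
      have h := Real.rpow_natCast (T ω ^ 2) 2
      push_cast at h
      show (T ω ^ 2) ^ (2:ℝ) = T ω ^ 4
      rw [h]; ring
    have he3 : ∫ ω, (A.indicator (fun _ => (1:ℝ)) ω) ^ (2:ℝ) ∂μ = (μ A).toReal := by
      have : (fun ω => (A.indicator (fun _ => (1:ℝ)) ω) ^ (2:ℝ))
          = A.indicator (fun _ => (1:ℝ)) := by
        funext ω
        by_cases h : ω ∈ A <;>
          simp [Set.indicator_of_mem, Set.indicator_of_notMem, h,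
            Real.zero_rpow (by norm_num : (2:ℝ) ≠ 0), Real.one_rpow]
      rw [this, integral_indicator_const _ hAm]
      simp [measureReal_def]
    rw [he1]
    refine le_trans hcs ?_
    rw [he2, he3]
    have hb4 : ∫ ω, T ω ^ 4 ∂μ ≤ 3 * n ^ 2 := m4
    have h4nn : (0:ℝ) ≤ ∫ ω, T ω ^ 4 ∂μ :=
      integral_nonneg fun ω => by positivity
    rw [Real.sqrt_eq_rpow, Real.sqrt_eq_rpow]
    gcongr
  -- combine
  have hn' : 0 < n - c := by linarith
  have key : n - c ≤ Real.sqrt (3 * n ^ 2) * Real.sqrt ((μ A).toReal) :=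
    le_trans step1 step2
  have hsq1 : Real.sqrt (3 * n ^ 2) ^ 2 = 3 * n ^ 2 := Real.sq_sqrt (by positivity)
  have hsq2 : Real.sqrt ((μ A).toReal) ^ 2 = (μ A).toReal := Real.sq_sqrt hrnn
  have hfin : (1/3) * (1 - c/n) ^ 2 ≤ (μ A).toReal := by
    have h1 : (n - c) ^ 2 ≤ 3 * n ^ 2 * (μ A).toReal := by
      nlinarith [Real.sqrt_nonneg (3 * n ^ 2), Real.sqrt_nonneg ((μ A).toReal)]
    have h2 : (1 - c/n) = (n - c)/n := by field_simp
    rw [h2, div_pow, show 1/3 * ((n - c)^2 / n^2) = (n-c)^2 / (3*n^2) by ring,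
      div_le_iff₀ (by positivity : (0:ℝ) < 3 * n ^ 2)]
    nlinarith
  calc ENNReal.ofReal ((1/3) * (1 - c / n) ^ 2) ≤ ENNReal.ofReal ((μ A).toReal) :=
        ENNReal.ofReal_le_ofReal hfin
    _ = μ A := ENNReal.ofReal_toReal (measure_ne_top _ _)

end rwaux2

/-- Anti-concentration lower bound for the empirical average of the endpoints of `N`
independent `j`-step symmetric `±1` random walks (Lemma 1 with constant `C = 1/3`). -/
theorem random_walk_average_anticoncentration
    {Ω : Type*} [MeasurableSpace Ω] (μ : Measure Ω) [IsProbabilityMeasure μ]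
    (N j : ℕ) (hN : 0 < N) (hj : 0 < j)
    (X : Fin N → Fin j → Ω → ℝ)
    (hmeas : ∀ i k, Measurable (X i k))
    (hindep : iIndepFun
      (fun (p : Fin N × Fin j) ω => X p.1 p.2 ω) μ)
    (hdist1 : ∀ i k, μ {ω | X i k ω = 1} = 1/2)
    (hdist2 : ∀ i k, μ {ω | X i k ω = -1} = 1/2)
    (ε : ℝ) (hε : 0 < ε) (hlt : ε ^ 2 * N < j) :
    ENNReal.ofReal ((1/3) * (1 - ε ^ 2 * N / j) ^ 2)
      ≤ μ {ω | ε ≤ |(∑ i : Fin N, ∑ k : Fin j, X i k ω) / N|} := by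
  classical
  set Y : Fin N × Fin j → Ω → ℝ := fun p ω => X p.1 p.2 ω with hYdef
  have hmeasY : ∀ p, Measurable (Y p) := fun p => hmeas p.1 p.2
  have haeY : ∀ p, ∀ᵐ ω ∂μ, Y p ω = 1 ∨ Y p ω = -1 :=
    fun p => rademacher_ae (hmeasY p) (hdist1 p.1 p.2) (hdist2 p.1 p.2)
  have hEY : ∀ p, ∫ ω, Y p ω ∂μ = 0 :=
    fun p => rademacher_integral (hmeasY p) (hdist1 p.1 p.2) (hdist2 p.1 p.2)
  obtain ⟨m2, m4⟩ := rademacher_sum_moments hmeasY hindep haeY hEY Finset.univ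
  have hNpos : (0:ℝ) < N := by exact_mod_cast hN
  have hjpos : (0:ℝ) < j := by exact_mod_cast hj
  set n : ℝ := (N : ℝ) * j with hn
  have hnpos : 0 < n := by positivity
  have hcard : (((Finset.univ : Finset (Fin N × Fin j))).card : ℝ) = n := by
    simp [Finset.card_univ, hn]
  set T : Ω → ℝ := fun ω => ∑ p : Fin N × Fin j, Y p ω with hTdef
  have hTmeas : Measurable T := Finset.measurable_sum _ (fun p _ => hmeasY p)
  have hTb : ∀ᵐ ω ∂μ, |T ω| ≤ n := by
    have h := sum_ae_bound (μ := μ) haeY Finset.univ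
    filter_upwards [h] with ω hω
    calc |T ω| ≤ ((Finset.univ : Finset (Fin N × Fin j)).card : ℝ) := hω
      _ = n := hcard
  have m2' : ∫ ω, T ω ^ 2 ∂μ = n := by rw [← hcard]; exact m2
  have m4' : ∫ ω, T ω ^ 4 ∂μ ≤ 3 * n ^ 2 := by rw [← hcard]; exact m4
  set c : ℝ := ε ^ 2 * (N:ℝ) ^ 2 with hcdef
  have hc : 0 ≤ c := by positivity
  have hcn : c < n := by
    have : ε ^ 2 * (N:ℝ) < j := hlt
    calc c = (ε ^ 2 * N) * N := by rw [hcdef]; ring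
      _ < j * N := by exact mul_lt_mul_of_pos_right this hNpos
      _ = n := by rw [hn]; ring
  have hpz := test_pz μ T hTmeas n hnpos hTb m2' m4' c hc hcn
  have hsub : {ω | c ≤ T ω ^ 2} ⊆ {ω | ε ≤ |(∑ i : Fin N, ∑ k : Fin j, X i k ω) / N|} := by
    intro ω hω
    have hc' : c ≤ T ω ^ 2 := hω
    have hTsum : (∑ i : Fin N, ∑ k : Fin j, X i k ω) = T ω := by
      rw [hTdef]
      exact (Fintype.sum_prod_type (f := fun p => Y p ω)).symm
    show ε ≤ |(∑ i : Fin N, ∑ k : Fin j, X i k ω) / N|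
    rw [hTsum, abs_div, abs_of_pos hNpos, le_div_iff₀ hNpos]
    have hsq : (ε * N) ^ 2 ≤ |T ω| ^ 2 := by
      rw [sq_abs]
      calc (ε * N) ^ 2 = c := by rw [hcdef]; ring
        _ ≤ T ω ^ 2 := hc'
    exact (abs_le_of_sq_le_sq' hsq (abs_nonneg _)).2
  have hconst : (1/3 : ℝ) * (1 - ε ^ 2 * N / j) ^ 2 = 1/3 * (1 - c / n) ^ 2 := by
    rw [hcdef, hn]
    field_simp
  rw [hconst]
  exact le_trans hpz (measure_mono hsub)
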